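/- arXiv:2410.07634 — 2 statements merged into one kernel-verified Lean document; each statement's English description precedes it below -/
import Mathlib

section
/- Let a, b > 0 be real numbers and let K be the vertex set of an a × b rectangle (four points with pairwise distances a, b, a, b, √(a²+b²), √(a²+b²)). Then for every positive integer r, every coloring of Euclidean space E^{8r+36} with r colors contains a monochromatic congruent copy of K or a rainbow congruent copy of K. -/
/-- `f` maps the configuration `K ⊆ E^m` to a congruent copy of itself in `E^d`: it preserves
all pairwise distances between points of `K` (hence is injective on `K`). -/
def IsCongruentCopy {m d : ℕ} (K : Set (EuclideanSpace ℝ (Fin m)))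
    (f : EuclideanSpace ℝ (Fin m) → EuclideanSpace ℝ (Fin d)) : Prop :=
  ∀ x ∈ K, ∀ y ∈ K, dist (f x) (f y) = dist x y

/-- The coloring `χ` of `E^d` contains a monochromatic congruent copy of `K ⊆ E^m`. -/
def HasMonoCopy {r m d : ℕ} (χ : EuclideanSpace ℝ (Fin d) → Fin r)
    (K : Set (EuclideanSpace ℝ (Fin m))) : Prop :=
  ∃ f, IsCongruentCopy K f ∧ ∃ col : Fin r, ∀ x ∈ K, χ (f x) = col

/-- The coloring `χ` of `E^d` contains a rainbow congruent copy of `K ⊆ E^m`. -/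
def HasRainbowCopy {r m d : ℕ} (χ : EuclideanSpace ℝ (Fin d) → Fin r)
    (K : Set (EuclideanSpace ℝ (Fin m))) : Prop :=
  ∃ f, IsCongruentCopy K f ∧ ∀ x ∈ K, ∀ y ∈ K, x ≠ y → χ (f x) ≠ χ (f y)

/-- The vertex set of a regular `(s-1)`-dimensional simplex with side length `a`, realized in
`E^s` as the set of points with exactly one nonzero coordinate, equal to `a/√2`. -/
def simplexVertices (s : ℕ) (a : ℝ) : Set (EuclideanSpace ℝ (Fin s)) :=
  Set.range fun i : Fin s => EuclideanSpace.single i (a / Real.sqrt 2)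

/-- The Cartesian product `K₁ ∗ K₂ ⊆ E^{m₁+m₂}` of configurations `K₁ ⊆ E^{m₁}` and
`K₂ ⊆ E^{m₂}`. -/
def cartesianProd {m₁ m₂ : ℕ} (K₁ : Set (EuclideanSpace ℝ (Fin m₁)))
    (K₂ : Set (EuclideanSpace ℝ (Fin m₂))) : Set (EuclideanSpace ℝ (Fin (m₁ + m₂))) :=
  {z | ∃ x ∈ K₁, ∃ y ∈ K₂,
    (∀ i : Fin m₁, z (Fin.castAdd m₂ i) = x i) ∧ (∀ j : Fin m₂, z (Fin.natAdd m₁ j) = y j)}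

/-- The vertex set `{(0,0), (a,0), (0,b), (a,b)} ⊆ E^2` of an `a × b` rectangle. -/
def rectVertices (a b : ℝ) : Set (EuclideanSpace ℝ (Fin 2)) :=
  {x | (x 0 = 0 ∨ x 0 = a) ∧ (x 1 = 0 ∨ x 1 = b)}


theorem pack_lemma {α β : Type*} [DecidableEq α] [DecidableEq β]
    (A : α → Finset β) :
    ∀ S : Finset α, (∀ i ∈ S, ∀ j ∈ S, i ≠ j → (A i ∩ A j).card ≤ 1) →
      2 * (∑ i ∈ S, (A i).card) ≤ 2 * (S.biUnion A).card + S.card * (S.card - 1) := by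
  intro S
  induction S using Finset.induction_on with
  | empty => simp
  | insert _ _ hx ih =>
    rename_i x s
    intro hpair
    have ihs := ih (fun i hi j hj hij => hpair i (Finset.mem_insert_of_mem hi)
      j (Finset.mem_insert_of_mem hj) hij)
    have hsum : ∑ i ∈ insert x s, (A i).card = (A x).card + ∑ i ∈ s, (A i).card :=
      Finset.sum_insert hx
    have hbu : (insert x s).biUnion A = A x ∪ s.biUnion A := Finset.biUnion_insert
    have hinter : (A x ∩ s.biUnion A).card ≤ s.card := by
      have h1 : A x ∩ s.biUnion A = s.biUnion (fun i => A x ∩ A i) := by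
        ext b; simp [Finset.mem_biUnion]; tauto
      rw [h1]
      calc (s.biUnion fun i => A x ∩ A i).card ≤ ∑ i ∈ s, (A x ∩ A i).card :=
              Finset.card_biUnion_le
        _ ≤ ∑ _i ∈ s, 1 := Finset.sum_le_sum (fun i hi => hpair x (Finset.mem_insert_self x s)
              i (Finset.mem_insert_of_mem hi) (fun h => hx (h ▸ hi)))
        _ = s.card := by simp
    have hunion : (A x ∪ s.biUnion A).card + (A x ∩ s.biUnion A).card
        = (A x).card + (s.biUnion A).card := Finset.card_union_add_card_inter _ _
    have hcard : (insert x s).card = s.card + 1 := Finset.card_insert_of_notMem hx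
    rw [hsum, hbu, hcard]
    have hk : (s.card + 1) * (s.card + 1 - 1) = s.card * (s.card - 1) + 2 * s.card := by
      cases s.card with
      | zero => simp
      | succ n => simp only [Nat.add_sub_cancel]; ring
    omega

theorem grid_lemma (r : ℕ) (hr : 0 < r)
    (c : Fin (4*r+2) → Fin (4*r+34) → Fin r) :
    (∃ i i' j j', i ≠ i' ∧ j ≠ j' ∧ (c i j = c i j' ∧ c i j = c i' j ∧ c i j = c i' j')) ∨
    (∃ i i' j j', i ≠ i' ∧ j ≠ j' ∧ (c i j ≠ c i j' ∧ c i j ≠ c i' j ∧ c i j ≠ c i' j'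
      ∧ c i j' ≠ c i' j ∧ c i j' ≠ c i' j' ∧ c i' j ≠ c i' j')) := by
  by_contra hcon
  classical
  have hNM : ∀ (i i' : Fin (4*r+2)) (j j' : Fin (4*r+34)), i ≠ i' → j ≠ j' →
      c i j = c i j' → c i j = c i' j → c i j ≠ c i' j' := by
    intro i i' j j' h1 h2 e1 e2 e3
    exact hcon (Or.inl ⟨i, i', j, j', h1, h2, e1, e2, e3⟩)
  have hNR : ∀ (i i' : Fin (4*r+2)) (j j' : Fin (4*r+34)), i ≠ i' → j ≠ j' →
      c i j ≠ c i j' → c i j ≠ c i' j → c i j ≠ c i' j' → c i j' ≠ c i' j →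
      c i j' ≠ c i' j' → c i' j ≠ c i' j' → False := by
    intro i i' j j' h1 h2 d1 d2 d3 d4 d5 d6
    exact hcon (Or.inr ⟨i, i', j, j', h1, h2, d1, d2, d3, d4, d5, d6⟩)
  -- Key B : same-color sets of two distinct rows meet in at most one column
  have keyB : ∀ i i' : Fin (4*r+2), i ≠ i' → ∀ m : Fin r,
      ((Finset.univ.filter fun j => c i j = m) ∩ (Finset.univ.filter fun j => c i' j = m)).card ≤ 1 := by
    intro i i' hii m
    by_contra hlt
    rw [Nat.not_le] at hlt
    obtain ⟨j, hj, j', hj', hjj⟩ := Finset.one_lt_card.mp hlt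
    simp only [Finset.mem_inter, Finset.mem_filter, Finset.mem_univ, true_and] at hj hj'
    exact hNM i i' j j' hii hjj (hj.1.trans hj'.1.symm) (hj.1.trans hj.2.symm)
      (hj.1.trans hj'.2.symm)
  -- Key A : two distinct rows agree on at most r columns
  have keyA : ∀ i i' : Fin (4*r+2), i ≠ i' →
      ((Finset.univ.filter fun j => c i j = c i' j)).card ≤ r := by
    intro i i' hii
    by_contra hlt
    rw [Nat.not_le] at hlt
    have hmaps : ∀ j ∈ (Finset.univ.filter fun j => c i j = c i' j),
        c i j ∈ (Finset.univ : Finset (Fin r)) := fun _ _ => Finset.mem_univ _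
    have hcard : (Finset.univ : Finset (Fin r)).card
        < (Finset.univ.filter fun j => c i j = c i' j).card := by simpa using hlt
    obtain ⟨j, hj, j', hj', hjj, heq⟩ :=
      Finset.exists_ne_map_eq_of_card_lt_of_maps_to hcard hmaps
    simp only [Finset.mem_filter, Finset.mem_univ, true_and] at hj hj'
    exact hNM i i' j j' hii hjj heq hj (heq.trans hj')
  -- Step C : given two distinct rows, one of them has a color used ≥ r+12 times
  have popC : ∀ i i' : Fin (4*r+2), i ≠ i' →
      (∃ m, r+12 ≤ (Finset.univ.filter fun j => c i j = m).card) ∨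
      (∃ m, r+12 ≤ (Finset.univ.filter fun j => c i' j = m).card) := by
    intro i i' hii
    set D : Finset (Fin (4*r+34)) := Finset.univ.filter (fun j => ¬ (c i j = c i' j)) with hDdef
    have hDcard : 3*r+34 ≤ D.card := by
      have h1 := Finset.card_filter_add_card_filter_not
        (s := (Finset.univ : Finset (Fin (4*r+34)))) (p := fun j => c i j = c i' j)
      rw [← hDdef] at h1
      have h2 := keyA i i' hii
      have h3 : (Finset.univ : Finset (Fin (4*r+34))).card = 4*r+34 := by simp
      omega
    have hDne : ∀ j ∈ D, c i j ≠ c i' j := by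
      intro j hj; exact (Finset.mem_filter.mp hj).2
    have hint : ∀ j ∈ D, ∀ j' ∈ D,
        c i j = c i j' ∨ c i j = c i' j' ∨ c i' j = c i j' ∨ c i' j = c i' j' := by
      intro j hj j' hj'
      by_cases hjj : j = j'
      · subst hjj; left; rfl
      · by_contra hno
        push_neg at hno
        obtain ⟨n1, n2, n3, n4⟩ := hno
        exact hNR i i' j j' hii hjj n1 (hDne j hj) n2 (fun h => n3 h.symm) (hDne j' hj') n4
    obtain ⟨j0, hj0⟩ : D.Nonempty := Finset.card_pos.mp (by omega)
    set x := c i j0 with hx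
    set y := c i' j0 with hy
    have hxyne : x ≠ y := hDne j0 hj0
    by_cases h1 : ∀ j ∈ D, c i j = x ∨ c i' j = x
    · have hsub : D ⊆ (Finset.univ.filter fun j => c i j = x)
          ∪ (Finset.univ.filter fun j => c i' j = x) := by
        intro j hj
        rcases h1 j hj with h | h
        · exact Finset.mem_union_left _ (by simp [h])
        · exact Finset.mem_union_right _ (by simp [h])
      have hle := (Finset.card_le_card hsub).trans (Finset.card_union_le _ _)
      by_cases hci : r+12 ≤ (Finset.univ.filter fun j => c i j = x).card
      · exact Or.inl ⟨x, hci⟩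
      · exact Or.inr ⟨x, by omega⟩
    · push_neg at h1
      obtain ⟨j1, hj1D, hj1x, hj1x'⟩ := h1
      have hpair1 : ∃ z, z ≠ x ∧ z ≠ y ∧
          ((c i j1 = y ∧ c i' j1 = z) ∨ (c i j1 = z ∧ c i' j1 = y)) := by
        rcases hint j1 hj1D j0 hj0 with h | h | h | h
        · exact absurd h hj1x
        · exact ⟨c i' j1, hj1x', fun hzy => (hDne j1 hj1D) (h.trans hzy.symm), Or.inl ⟨h, rfl⟩⟩
        · exact absurd h hj1x'
        · exact ⟨c i j1, hj1x, fun hzy => (hDne j1 hj1D) (hzy.trans h.symm), Or.inr ⟨rfl, h⟩⟩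
      obtain ⟨z, hzx, hzy, hpair1⟩ := hpair1
      by_cases h2 : ∀ j ∈ D, c i j = y ∨ c i' j = y
      · have hsub : D ⊆ (Finset.univ.filter fun j => c i j = y)
            ∪ (Finset.univ.filter fun j => c i' j = y) := by
          intro j hj
          rcases h2 j hj with h | h
          · exact Finset.mem_union_left _ (by simp [h])
          · exact Finset.mem_union_right _ (by simp [h])
        have hle := (Finset.card_le_card hsub).trans (Finset.card_union_le _ _)
        by_cases hci : r+12 ≤ (Finset.univ.filter fun j => c i j = y).card
        · exact Or.inl ⟨y, hci⟩
        · exact Or.inr ⟨y, by omega⟩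
      · push_neg at h2
        obtain ⟨j2, hj2D, hj2y, hj2y'⟩ := h2
        have hx2 : c i j2 = x ∨ c i' j2 = x := by
          rcases hint j2 hj2D j0 hj0 with h | h | h | h
          · exact Or.inl h
          · exact absurd h hj2y
          · exact Or.inr h
          · exact absurd h hj2y'
        have hz2 : c i j2 = z ∨ c i' j2 = z := by
          rcases hint j2 hj2D j1 hj1D with h | h | h | h <;>
            rcases hpair1 with ⟨e1, e2⟩ | ⟨e1, e2⟩
          · rw [e1] at h; exact absurd h hj2y
          · rw [e1] at h; exact Or.inl h
          · rw [e2] at h; exact Or.inl h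
          · rw [e2] at h; exact absurd h hj2y
          · rw [e1] at h; exact absurd h hj2y'
          · rw [e1] at h; exact Or.inr h
          · rw [e2] at h; exact Or.inr h
          · rw [e2] at h; exact absurd h hj2y'
        have hpair2 : (c i j2 = x ∧ c i' j2 = z) ∨ (c i j2 = z ∧ c i' j2 = x) := by
          rcases hx2 with h | h <;> rcases hz2 with h' | h'
          · exact absurd (h'.symm.trans h) hzx
          · exact Or.inl ⟨h, h'⟩
          · exact Or.inr ⟨h', h⟩
          · exact absurd (h'.symm.trans h) hzx
        have tri : ∀ j ∈ D, c i j = x ∨ c i j = y ∨ c i j = z := by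
          intro j hj
          by_contra hno
          push_neg at hno
          obtain ⟨nx, ny, nz⟩ := hno
          have hA : c i' j = x ∨ c i' j = y := by
            rcases hint j hj j0 hj0 with h | h | h | h
            · exact absurd h nx
            · exact absurd h ny
            · exact Or.inl h
            · exact Or.inr h
          have hB : c i' j = y ∨ c i' j = z := by
            rcases hint j hj j1 hj1D with h | h | h | h <;>
              rcases hpair1 with ⟨e1, e2⟩ | ⟨e1, e2⟩
            · rw [e1] at h; exact absurd h ny
            · rw [e1] at h; exact absurd h nz
            · rw [e2] at h; exact absurd h nz
            · rw [e2] at h; exact absurd h ny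
            · rw [e1] at h; exact Or.inl h
            · rw [e1] at h; exact Or.inr h
            · rw [e2] at h; exact Or.inr h
            · rw [e2] at h; exact Or.inl h
          have hC : c i' j = x ∨ c i' j = z := by
            rcases hint j hj j2 hj2D with h | h | h | h <;>
              rcases hpair2 with ⟨e1, e2⟩ | ⟨e1, e2⟩
            · rw [e1] at h; exact absurd h nx
            · rw [e1] at h; exact absurd h nz
            · rw [e2] at h; exact absurd h nz
            · rw [e2] at h; exact absurd h nx
            · rw [e1] at h; exact Or.inl h
            · rw [e1] at h; exact Or.inr h
            · rw [e2] at h; exact Or.inr h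
            · rw [e2] at h; exact Or.inl h
          rcases hA with h | h
          · rcases hB with h' | h'
            · exact hxyne (h.symm.trans h')
            · exact hzx (h'.symm.trans h)
          · rcases hC with h'' | h''
            · exact hxyne (h''.symm.trans h)
            · exact hzy (h''.symm.trans h)
        have hsub : D ⊆ (Finset.univ.filter fun j => c i j = x)
            ∪ ((Finset.univ.filter fun j => c i j = y) ∪ (Finset.univ.filter fun j => c i j = z)) := by
          intro j hj
          rcases tri j hj with h | h | h
          · exact Finset.mem_union_left _ (by simp [h])
          · exact Finset.mem_union_right _ (Finset.mem_union_left _ (by simp [h]))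
          · exact Finset.mem_union_right _ (Finset.mem_union_right _ (by simp [h]))
        have hle : D.card ≤ (Finset.univ.filter fun j => c i j = x).card
            + ((Finset.univ.filter fun j => c i j = y).card
              + (Finset.univ.filter fun j => c i j = z).card) := by
          refine (Finset.card_le_card hsub).trans ?_
          refine (Finset.card_union_le _ _).trans ?_
          exact Nat.add_le_add_left (Finset.card_union_le _ _) _
        by_cases hcx : r+12 ≤ (Finset.univ.filter fun j => c i j = x).card
        · exact Or.inl ⟨x, hcx⟩
        by_cases hcy : r+12 ≤ (Finset.univ.filter fun j => c i j = y).card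
        · exact Or.inl ⟨y, hcy⟩
        · exact Or.inl ⟨z, by omega⟩
  -- the set of popular rows
  have hPopCard : 4*r+1 ≤ (Finset.univ.filter
      (fun i : Fin (4*r+2) => ∃ m, r+12 ≤ (Finset.univ.filter fun j => c i j = m).card)).card := by
    have hbad : (Finset.univ.filter (fun i : Fin (4*r+2) =>
        ¬ ∃ m, r+12 ≤ (Finset.univ.filter fun j => c i j = m).card)).card ≤ 1 := by
      by_contra hlt
      rw [Nat.not_le] at hlt
      obtain ⟨i, hi, i', hi', hii⟩ := Finset.one_lt_card.mp hlt
      rcases popC i i' hii with h | h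
      · exact (Finset.mem_filter.mp hi).2 h
      · exact (Finset.mem_filter.mp hi').2 h
    have h1 := Finset.card_filter_add_card_filter_not
      (s := (Finset.univ : Finset (Fin (4*r+2))))
      (p := fun i => ∃ m, r+12 ≤ (Finset.univ.filter fun j => c i j = m).card)
    have h3 : (Finset.univ : Finset (Fin (4*r+2))).card = 4*r+2 := by simp
    omega
  -- choose a top color for each popular row
  let top : Fin (4*r+2) → Fin r := fun i =>
    if h : ∃ m, r+12 ≤ (Finset.univ.filter fun j => c i j = m).card then h.choose else ⟨0, hr⟩
  have htop : ∀ i : Fin (4*r+2), (∃ m, r+12 ≤ (Finset.univ.filter fun j => c i j = m).card) →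
      r+12 ≤ (Finset.univ.filter fun j => c i j = top i).card := by
    intro i h
    simp only [top, dif_pos h]
    exact h.choose_spec
  -- pigeonhole: 5 popular rows share their top color
  obtain ⟨m, -, hm⟩ : ∃ m ∈ (Finset.univ : Finset (Fin r)), 4 <
      ((Finset.univ.filter
        (fun i : Fin (4*r+2) => ∃ m, r+12 ≤ (Finset.univ.filter fun j => c i j = m).card)).filter
        fun i => top i = m).card := by
    apply Finset.exists_lt_card_fiber_of_mul_lt_card_of_maps_to
    · intro i _; exact Finset.mem_univ _
    · have h4 : (Finset.univ : Finset (Fin r)).card = r := by simp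
      omega
  obtain ⟨S, hSsub, hScard⟩ := Finset.exists_subset_card_eq (le_of_lt hm)
  have hS : ∀ i ∈ S, r+12 ≤ (Finset.univ.filter fun j => c i j = m).card := by
    intro i hi
    have h5 := hSsub hi
    simp only [Finset.mem_filter, Finset.mem_univ, true_and] at h5
    have := htop i h5.1
    rwa [h5.2] at this
  have hpack := pack_lemma (fun i => Finset.univ.filter fun j => c i j = m) S
    (fun i hi i' hi' hii => keyB i i' hii m)
  have hsum : S.card * (r+12) ≤ ∑ i ∈ S, (Finset.univ.filter fun j => c i j = m).card := by
    calc S.card * (r+12) = S.card • (r+12) := by simp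
      _ ≤ ∑ i ∈ S, (Finset.univ.filter fun j => c i j = m).card :=
        Finset.card_nsmul_le_sum S _ _ hS
  have hbu : (S.biUnion fun i => Finset.univ.filter fun j => c i j = m).card ≤ 4*r+34 := by
    have := Finset.card_le_univ (S.biUnion fun i => Finset.univ.filter fun j => c i j = m)
    simpa using this
  have hred : (∑ i ∈ S, ((fun i => Finset.univ.filter fun j => c i j = m) i).card)
      = ∑ i ∈ S, (Finset.univ.filter fun j => c i j = m).card := rfl
  rw [hred] at hpack
  rw [hScard] at hsum hpack
  omega


open scoped InnerProductSpace

def iotaIdx (r : ℕ) (i : Fin (4*r+2)) : Fin (8*r+36) := ⟨(i:ℕ), by have := i.isLt; omega⟩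
def kappaIdx (r : ℕ) (j : Fin (4*r+34)) : Fin (8*r+36) := ⟨4*r+2+(j:ℕ), by have := j.isLt; omega⟩

lemma iotaIdx_inj {r : ℕ} {i i' : Fin (4*r+2)} : iotaIdx r i = iotaIdx r i' ↔ i = i' := by
  constructor
  · intro h
    have := congrArg Fin.val h
    simp only [iotaIdx] at this
    exact Fin.ext this
  · rintro rfl; rfl

lemma kappaIdx_inj {r : ℕ} {j j' : Fin (4*r+34)} : kappaIdx r j = kappaIdx r j' ↔ j = j' := by
  constructor
  · intro h
    have := congrArg Fin.val h
    simp only [kappaIdx] at this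
    exact Fin.ext (by omega)
  · rintro rfl; rfl

lemma iotaIdx_ne_kappaIdx {r : ℕ} (i : Fin (4*r+2)) (j : Fin (4*r+34)) :
    iotaIdx r i ≠ kappaIdx r j := by
  intro h
  have := congrArg Fin.val h
  simp only [iotaIdx, kappaIdx] at this
  have := i.isLt
  omega

noncomputable def gridPt (r : ℕ) (a b : ℝ) (i : Fin (4*r+2)) (j : Fin (4*r+34)) :
    EuclideanSpace ℝ (Fin (8*r+36)) :=
  EuclideanSpace.single (iotaIdx r i) (a / Real.sqrt 2)
    + EuclideanSpace.single (kappaIdx r j) (b / Real.sqrt 2)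

lemma inner_single_single {n : ℕ} (k l : Fin n) (u v : ℝ) :
    ⟪EuclideanSpace.single k u, EuclideanSpace.single l v⟫_ℝ = if k = l then u*v else 0 := by
  rw [EuclideanSpace.inner_single_left]
  simp only [EuclideanSpace.single_apply]
  by_cases h : k = l
  · simp [h]
  · simp [h]

lemma half_sq (u : ℝ) : (u / Real.sqrt 2) * (u / Real.sqrt 2) = u^2/2 := by
  rw [div_mul_div_comm, Real.mul_self_sqrt (by norm_num : (0:ℝ) ≤ 2), pow_two]

lemma kappaIdx_ne_iotaIdx {r : ℕ} (i : Fin (4*r+2)) (j : Fin (4*r+34)) :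
    kappaIdx r j ≠ iotaIdx r i := (iotaIdx_ne_kappaIdx i j).symm

lemma expand_quad {E : Type*} [NormedAddCommGroup E] [InnerProductSpace ℝ E] (A B A' B' : E) :
    ⟪A + B - (A' + B'), A + B - (A' + B')⟫_ℝ
      = ⟪A,A⟫_ℝ + ⟪B,B⟫_ℝ + ⟪A',A'⟫_ℝ + ⟪B',B'⟫_ℝ
        - 2*⟪A,A'⟫_ℝ - 2*⟪B,B'⟫_ℝ + 2*⟪A,B⟫_ℝ + 2*⟪A',B'⟫_ℝ - 2*⟪A,B'⟫_ℝ - 2*⟪B,A'⟫_ℝ := by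
  simp only [inner_sub_left, inner_sub_right, inner_add_left, inner_add_right,
    real_inner_comm A' A, real_inner_comm B' B, real_inner_comm B A, real_inner_comm A' B,
    real_inner_comm B' A, real_inner_comm B' A']
  ring

lemma dist_gridPt (r : ℕ) (a b : ℝ) (i i' : Fin (4*r+2)) (j j' : Fin (4*r+34)) :
    dist (gridPt r a b i j) (gridPt r a b i' j')
      = Real.sqrt ((if i = i' then 0 else a^2) + (if j = j' then 0 else b^2)) := by
  by_cases hii : i = i' <;> by_cases hjj : j = j'
  · subst hii; subst hjj; simp [dist_self]
  all_goals
    rw [dist_eq_norm, norm_eq_sqrt_real_inner]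
    congr 1
    unfold gridPt
    rw [expand_quad]
    simp only [inner_single_single, iotaIdx_inj, kappaIdx_inj,
      if_neg (iotaIdx_ne_kappaIdx i j), if_neg (iotaIdx_ne_kappaIdx i' j'),
      if_neg (iotaIdx_ne_kappaIdx i j'), if_neg (kappaIdx_ne_iotaIdx i' j),
      if_pos (rfl : i = i), if_pos (rfl : i' = i'), if_pos (rfl : j = j), if_pos (rfl : j' = j'),
      half_sq]
  · rw [if_pos hii, if_neg hjj, if_pos hii, if_neg hjj]
    norm_num
    try ring
  · rw [if_neg hii, if_pos hjj, if_neg hii, if_pos hjj]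
    norm_num
    try ring
  · rw [if_neg hii, if_neg hjj, if_neg hii, if_neg hjj]
    norm_num
    try ring

lemma dist_E2 (x y : EuclideanSpace ℝ (Fin 2)) :
    dist x y = Real.sqrt ((x 0 - y 0)^2 + (x 1 - y 1)^2) := by
  rw [EuclideanSpace.dist_eq, Fin.sum_univ_two]
  rw [Real.dist_eq, Real.dist_eq, sq_abs, sq_abs]


noncomputable def rectMap (r : ℕ) (a b : ℝ) (i i' : Fin (4*r+2)) (j j' : Fin (4*r+34))
    (x : EuclideanSpace ℝ (Fin 2)) : EuclideanSpace ℝ (Fin (8*r+36)) :=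
  gridPt r a b (if x 0 = 0 then i else i') (if x 1 = 0 then j else j')

lemma rectMap_congruent (r : ℕ) (a b : ℝ) (ha : 0 < a) (hb : 0 < b)
    (i i' : Fin (4*r+2)) (j j' : Fin (4*r+34)) (hii : i ≠ i') (hjj : j ≠ j') :
    IsCongruentCopy (rectVertices a b) (rectMap r a b i i' j j') := by
  intro x hx y hy
  obtain ⟨hx0, hx1⟩ := hx
  obtain ⟨hy0, hy1⟩ := hy
  simp only [rectMap]
  rw [dist_gridPt, dist_E2]
  have h0 : (if (if x 0 = 0 then i else i') = (if y 0 = 0 then i else i') then (0:ℝ) else a^2)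
      = (x 0 - y 0)^2 := by
    rcases hx0 with h | h <;> rcases hy0 with h' | h' <;>
      simp [h, h', ha.ne', hii, Ne.symm hii] <;> try ring
  have h1 : (if (if x 1 = 0 then j else j') = (if y 1 = 0 then j else j') then (0:ℝ) else b^2)
      = (x 1 - y 1)^2 := by
    rcases hx1 with h | h <;> rcases hy1 with h' | h' <;>
      simp [h, h', hb.ne', hjj, Ne.symm hjj] <;> try ring
  rw [h0, h1]

/-- For reals `a, b > 0`, let `K` be the vertex set of an `a × b` rectangle. Then for every
positive integer `r`, every `r`-coloring of `E^{8r+36}` contains a monochromatic or rainbow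
congruent copy of `K`. -/
theorem euclidean_gallai_ramsey_rectangle (a b : ℝ) (ha : 0 < a) (hb : 0 < b)
    (r : ℕ) (hr : 0 < r) (χ : EuclideanSpace ℝ (Fin (8 * r + 36)) → Fin r) :
    HasMonoCopy χ (rectVertices a b) ∨ HasRainbowCopy χ (rectVertices a b) := by
  classical
  rcases grid_lemma r hr (fun i j => χ (gridPt r a b i j)) with
    ⟨i, i', j, j', hii, hjj, e1, e2, e3⟩ | ⟨i, i', j, j', hii, hjj, d1, d2, d3, d4, d5, d6⟩
  · left
    refine ⟨rectMap r a b i i' j j', rectMap_congruent r a b ha hb i i' j j' hii hjj,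
      χ (gridPt r a b i j), ?_⟩
    intro x hx
    obtain ⟨hx0, hx1⟩ := hx
    simp only [rectMap]
    by_cases h0 : x 0 = 0 <;> by_cases h1 : x 1 = 0
    · rw [if_pos h0, if_pos h1]
    · rw [if_pos h0, if_neg h1]; exact e1.symm
    · rw [if_neg h0, if_pos h1]; exact e2.symm
    · rw [if_neg h0, if_neg h1]; exact e3.symm
  · right
    refine ⟨rectMap r a b i i' j j', rectMap_congruent r a b ha hb i i' j j' hii hjj, ?_⟩
    intro x hx y hy hxy
    obtain ⟨hx0, hx1⟩ := hx
    obtain ⟨hy0, hy1⟩ := hy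
    have hxy' : ¬ (x 0 = y 0 ∧ x 1 = y 1) := by
      rintro ⟨u, v⟩
      apply hxy
      ext k
      fin_cases k
      · exact u
      · exact v
    simp only [rectMap]
    rcases hx0 with h1 | h1 <;> rcases hy0 with h3 | h3 <;>
      rcases hx1 with h2 | h2 <;> rcases hy1 with h4 | h4 <;>
      simp only [h1, h2, h3, h4, ha.ne', hb.ne', eq_self_iff_true, if_true, if_false] <;>
      first
        | exact d1 | exact d2 | exact d3 | exact d4 | exact d5 | exact d6
        | exact Ne.symm d1 | exact Ne.symm d2 | exact Ne.symm d3
        | exact Ne.symm d4 | exact Ne.symm d5 | exact Ne.symm d6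
        | exact absurd ⟨h1.trans h3.symm, h2.trans h4.symm⟩ hxy'
end

section
/- The following two assertions are equivalent: (1) for all Gallai-Ramsey configurations K₁ and K₂, the Cartesian product K₁∗K₂ is Gallai-Ramsey; (2) every Gallai-Ramsey configuration is Ramsey. -/
/-- A configuration `K ⊆ E^m` is Ramsey if for every positive number of colors `r` there is a
dimension `d` such that every `r`-coloring of `E^d` contains a monochromatic congruent copy
of `K`. -/
def IsRamseyConfig {m : ℕ} (K : Set (EuclideanSpace ℝ (Fin m))) : Prop :=
  ∀ r : ℕ, 0 < r → ∃ d : ℕ, ∀ χ : EuclideanSpace ℝ (Fin d) → Fin r, HasMonoCopy χ K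

/-- A configuration `K ⊆ E^m` is Gallai-Ramsey if for every positive number of colors `r`
there is a dimension `d` such that every `r`-coloring of `E^d` contains a monochromatic or a
rainbow congruent copy of `K`. -/
def IsGallaiRamseyConfig {m : ℕ} (K : Set (EuclideanSpace ℝ (Fin m))) : Prop :=
  ∀ r : ℕ, 0 < r → ∃ d : ℕ, ∀ χ : EuclideanSpace ℝ (Fin d) → Fin r,
    HasMonoCopy χ K ∨ HasRainbowCopy χ K

/-! ### Auxiliary definitions and lemmas -/

/-- Gluing a point of `E^a` and a point of `E^b` into a point of `E^{a+b}`. -/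
noncomputable def glue {a b : ℕ} (u : EuclideanSpace ℝ (Fin a)) (v : EuclideanSpace ℝ (Fin b)) :
    EuclideanSpace ℝ (Fin (a+b)) :=
  WithLp.toLp 2 (fun k => Fin.addCases (motive := fun _ => ℝ) (fun i => u i) (fun j => v j) k)

@[simp] lemma glue_castAdd {a b : ℕ} (u : EuclideanSpace ℝ (Fin a)) (v : EuclideanSpace ℝ (Fin b))
    (i : Fin a) : glue u v (Fin.castAdd b i) = u i :=
  Fin.addCases_left (motive := fun _ => ℝ) (left := fun i => u i) (right := fun j => v j) i

@[simp] lemma glue_natAdd {a b : ℕ} (u : EuclideanSpace ℝ (Fin a)) (v : EuclideanSpace ℝ (Fin b))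
    (j : Fin b) : glue u v (Fin.natAdd a j) = v j :=
  Fin.addCases_right (motive := fun _ => ℝ) (left := fun i => u i) (right := fun j => v j) j

/-- The first projection `E^{a+b} → E^a`. -/
noncomputable def proj1 {a b : ℕ} (z : EuclideanSpace ℝ (Fin (a+b))) :
    EuclideanSpace ℝ (Fin a) := WithLp.toLp 2 (fun i => z (Fin.castAdd b i))

/-- The second projection `E^{a+b} → E^b`. -/
noncomputable def proj2 {a b : ℕ} (z : EuclideanSpace ℝ (Fin (a+b))) :
    EuclideanSpace ℝ (Fin b) := WithLp.toLp 2 (fun j => z (Fin.natAdd a j))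

@[simp] lemma proj1_glue {a b : ℕ} (u : EuclideanSpace ℝ (Fin a))
    (v : EuclideanSpace ℝ (Fin b)) : proj1 (glue u v) = u :=
  PiLp.ext fun i => glue_castAdd u v i

@[simp] lemma proj2_glue {a b : ℕ} (u : EuclideanSpace ℝ (Fin a))
    (v : EuclideanSpace ℝ (Fin b)) : proj2 (glue u v) = v :=
  PiLp.ext fun j => glue_natAdd u v j

lemma eq_glue {a b : ℕ} {z : EuclideanSpace ℝ (Fin (a+b))} {x : EuclideanSpace ℝ (Fin a)}
    {y : EuclideanSpace ℝ (Fin b)} (h1 : ∀ i : Fin a, z (Fin.castAdd b i) = x i)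
    (h2 : ∀ j : Fin b, z (Fin.natAdd a j) = y j) : z = glue x y := by
  refine PiLp.ext fun k => ?_
  induction k using Fin.addCases with
  | left i => rw [h1 i, glue_castAdd]
  | right j => rw [h2 j, glue_natAdd]

lemma glue_mem {m₁ m₂ : ℕ} {K₁ : Set (EuclideanSpace ℝ (Fin m₁))}
    {K₂ : Set (EuclideanSpace ℝ (Fin m₂))} {x y} (hx : x ∈ K₁) (hy : y ∈ K₂) :
    glue x y ∈ cartesianProd K₁ K₂ :=
  ⟨x, hx, y, hy, fun i => glue_castAdd x y i, fun j => glue_natAdd x y j⟩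

lemma dist_glue {a b : ℕ} (u u' : EuclideanSpace ℝ (Fin a)) (v v' : EuclideanSpace ℝ (Fin b)) :
    dist (glue u v) (glue u' v') = Real.sqrt (dist u u' ^ 2 + dist v v' ^ 2) := by
  rw [EuclideanSpace.dist_eq, EuclideanSpace.dist_eq, EuclideanSpace.dist_eq]
  rw [Real.sq_sqrt (by positivity), Real.sq_sqrt (by positivity)]
  congr 1
  rw [Fin.sum_univ_add]
  simp

lemma dist_single_single' {s : ℕ} (i j : Fin s) (c : ℝ) (hij : i ≠ j) :
    dist (EuclideanSpace.single i c) (EuclideanSpace.single j c) = Real.sqrt (2 * c ^ 2) := by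
  rw [EuclideanSpace.dist_eq]
  congr 1
  have : ∀ k : Fin s, dist (EuclideanSpace.single i c k) (EuclideanSpace.single j c k) ^ 2
      = (if k = i then c ^ 2 else 0) + (if k = j then c ^ 2 else 0) := by
    intro k
    rw [EuclideanSpace.single_apply, EuclideanSpace.single_apply, Real.dist_eq]
    by_cases h1 : k = i <;> by_cases h2 : k = j
    · exact absurd (h1 ▸ h2 : i = j).symm (by exact fun h => hij h.symm)
    · simp [h1, h2, hij, hij.symm, sq_abs]
    · simp [h1, h2, hij, hij.symm, sq_abs]
    · simp [h1, h2]
  rw [Finset.sum_congr rfl fun k _ => this k, Finset.sum_add_distrib]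
  simp [Finset.sum_ite_eq]
  ring

lemma single_inj {s : ℕ} {i j : Fin s} {c : ℝ} (hc : c ≠ 0)
    (h : EuclideanSpace.single i c = EuclideanSpace.single j c) : i = j := by
  by_contra hij
  have : EuclideanSpace.single i c i = EuclideanSpace.single j c i := by rw [h]
  rw [EuclideanSpace.single_apply, EuclideanSpace.single_apply] at this
  simp [hij, fun hh : i = j => hij hh] at this
  · exact hc this

/-- Compactness: if every `r`-coloring of `E^d` contains a monochromatic copy of the finite
configuration `K`, then there is a finite set `Y ⊆ E^d` such that every `r`-coloring contains
a monochromatic copy of `K` lying inside `Y`. -/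
lemma exists_finite_witness {m d r : ℕ} (hr : 0 < r) (K : Set (EuclideanSpace ℝ (Fin m)))
    (hK : K.Finite)
    (h : ∀ χ : EuclideanSpace ℝ (Fin d) → Fin r, HasMonoCopy χ K) :
    ∃ Y : Set (EuclideanSpace ℝ (Fin d)), Y.Finite ∧
      ∀ χ : EuclideanSpace ℝ (Fin d) → Fin r, ∃ f, IsCongruentCopy K f ∧
        (∀ x ∈ K, f x ∈ Y) ∧ ∃ col, ∀ x ∈ K, χ (f x) = col := by
  by_contra hcon
  push_neg at hcon
  letI : TopologicalSpace (Fin r) := ⊥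
  haveI : DiscreteTopology (Fin r) := ⟨rfl⟩
  set Z : (EuclideanSpace ℝ (Fin m) → EuclideanSpace ℝ (Fin d)) →
      Set (EuclideanSpace ℝ (Fin d) → Fin r) :=
    fun f => {χ | ¬ (IsCongruentCopy K f ∧ ∃ col, ∀ x ∈ K, χ (f x) = col)} with hZ
  have hZc : ∀ f, IsClosed (Z f) := by
    intro f
    rw [← isOpen_compl_iff]
    have hcompl : (Z f)ᶜ = {χ | IsCongruentCopy K f ∧ ∃ col, ∀ x ∈ K, χ (f x) = col} := by
      ext χ; simp [hZ]
    rw [hcompl]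
    by_cases hcopy : IsCongruentCopy K f
    · have : {χ : EuclideanSpace ℝ (Fin d) → Fin r |
          IsCongruentCopy K f ∧ ∃ col, ∀ x ∈ K, χ (f x) = col}
          = ⋃ col, ⋂ x ∈ K, {χ | χ (f x) = col} := by
        ext χ; simp [hcopy]
      rw [this]
      refine isOpen_iUnion fun col => hK.isOpen_biInter fun x _ => ?_
      show IsOpen ((fun χ : EuclideanSpace ℝ (Fin d) → Fin r => χ (f x)) ⁻¹' {col})
      exact IsOpen.preimage (continuous_apply (f x)) (isOpen_discrete ({col} : Set (Fin r)))
    · have : {χ : EuclideanSpace ℝ (Fin d) → Fin r |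
          IsCongruentCopy K f ∧ ∃ col, ∀ x ∈ K, χ (f x) = col} = ∅ := by
        ext χ; simp [hcopy]
      rw [this]; exact isOpen_empty
  have hne : (Set.univ ∩ ⋂ f, Z f).Nonempty := by
    by_contra hemp
    rw [Set.not_nonempty_iff_eq_empty] at hemp
    obtain ⟨t, ht⟩ := isCompact_univ.elim_finite_subfamily_closed Z hZc hemp
    set Y : Set (EuclideanSpace ℝ (Fin d)) := ⋃ f ∈ t, f '' K with hYdef
    have hYfin : Y.Finite := t.finite_toSet.biUnion fun f _ => hK.image f
    obtain ⟨χ, hχ⟩ := hcon Y hYfin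
    have hmem : χ ∈ Set.univ ∩ ⋂ f ∈ t, Z f := by
      refine ⟨trivial, Set.mem_iInter₂.mpr fun f hf => ?_⟩
      rintro ⟨hcopy, col, hmono⟩
      obtain ⟨x, hx, hnecol⟩ := hχ f hcopy
        (fun x hx => Set.mem_biUnion hf ⟨x, hx, rfl⟩) col
      exact hnecol (hmono x hx)
    rw [ht] at hmem
    exact hmem
  obtain ⟨χ, -, hχ⟩ := hne
  obtain ⟨f, hfcopy, col, hfmono⟩ := h χ
  exact (Set.mem_iInter.mp hχ f) ⟨hfcopy, col, hfmono⟩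

/-- The regular simplex on `s+1` vertices with side length `1` is Ramsey. -/
lemma simplex_ramsey (s : ℕ) : IsRamseyConfig (simplexVertices (s + 1) 1) := by
  intro r hr
  refine ⟨r * s + 1, fun χ => ?_⟩
  set c : ℝ := 1 / Real.sqrt 2 with hc
  have hc0 : c ≠ 0 := by
    rw [hc]; positivity
  set g : Fin (r * s + 1) → Fin r := fun i => χ (EuclideanSpace.single i c) with hg
  have hpig : ∃ col, s < (Finset.univ.filter fun i => g i = col).card := by
    apply Fintype.exists_lt_card_fiber_of_mul_lt_card
    simp
  obtain ⟨col, hcol⟩ := hpig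
  obtain ⟨t, hts, htcard⟩ := Finset.exists_subset_card_eq (Nat.succ_le_of_lt hcol)
  let ι := t.orderIsoOfFin htcard
  have hιinj : Function.Injective (fun i : Fin (s+1) => (ι i : Fin (r * s + 1))) :=
    fun i j hij => ι.injective (Subtype.ext hij)
  classical
  refine ⟨fun x => if h : ∃ i : Fin (s+1), x = EuclideanSpace.single i c
    then EuclideanSpace.single ((ι h.choose : Fin (r * s + 1))) c else 0, ?_, col, ?_⟩
  · rintro x ⟨i, hi⟩ y ⟨j, hj⟩
    have hi' : x = EuclideanSpace.single i c := hi.symm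
    have hj' : y = EuclideanSpace.single j c := hj.symm
    rw [hi', hj']
    have hx : ∃ i' : Fin (s+1), EuclideanSpace.single i c = EuclideanSpace.single i' c := ⟨i, rfl⟩
    have hy : ∃ j' : Fin (s+1), EuclideanSpace.single j c = EuclideanSpace.single j' c := ⟨j, rfl⟩
    beta_reduce
    rw [dif_pos hx, dif_pos hy]
    have hxi : hx.choose = i := (single_inj hc0 hx.choose_spec).symm
    have hyj : hy.choose = j := (single_inj hc0 hy.choose_spec).symm
    rw [hxi, hyj]
    rcases eq_or_ne i j with rfl | hij
    · simp
    · rw [dist_single_single' _ _ _ hij, dist_single_single' _ _ _ (fun hh => hij (hιinj hh))]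
  · rintro x ⟨i, hi⟩
    have hi' : x = EuclideanSpace.single i c := hi.symm
    rw [hi']
    have hx : ∃ i' : Fin (s+1), EuclideanSpace.single i c = EuclideanSpace.single i' c := ⟨i, rfl⟩
    beta_reduce
    rw [dif_pos hx]
    have hmem : (ι hx.choose : Fin (r * s + 1)) ∈ Finset.univ.filter fun k => g k = col :=
      hts (ι hx.choose).2
    simpa using (Finset.mem_filter.mp hmem).2

/-- Every Ramsey configuration is Gallai-Ramsey. -/
lemma ramsey_imp_gallai {m : ℕ} {K : Set (EuclideanSpace ℝ (Fin m))}
    (h : IsRamseyConfig K) : IsGallaiRamseyConfig K := fun r hr =>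
  (h r hr).imp fun _ hd χ => Or.inl (hd χ)

/-- The Cartesian product of two Ramsey configurations is Ramsey. -/
lemma product_ramsey {m₁ m₂ : ℕ} {K₁ : Set (EuclideanSpace ℝ (Fin m₁))}
    {K₂ : Set (EuclideanSpace ℝ (Fin m₂))} (hK₂f : K₂.Finite) (hne₁ : K₁.Nonempty)
    (h₁ : IsRamseyConfig K₁) (h₂ : IsRamseyConfig K₂) :
    IsRamseyConfig (cartesianProd K₁ K₂) := by
  intro r hr
  obtain ⟨d₂, hd₂⟩ := h₂ r hr
  obtain ⟨Y, hYfin, hY⟩ := exists_finite_witness hr K₂ hK₂f hd₂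
  classical
  haveI : Fintype Y := hYfin.fintype
  haveI : Nonempty (Fin r) := ⟨⟨0, hr⟩⟩
  obtain ⟨d₁, hd₁⟩ := h₁ (Fintype.card (Y → Fin r))
    (Fintype.card_pos_iff.mpr ⟨fun _ => Classical.arbitrary _⟩)
  refine ⟨d₁ + d₂, fun χ => ?_⟩
  set e := Fintype.equivFin (Y → Fin r) with he
  obtain ⟨f₁, hf₁copy, col', hf₁mono⟩ := hd₁ (fun u => e fun y => χ (glue u y.1))
  obtain ⟨x₀, hx₀⟩ := hne₁
  obtain ⟨f₂, hf₂copy, hf₂Y, col, hf₂mono⟩ := hY (fun v => χ (glue (f₁ x₀) v))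
  refine ⟨fun z => glue (f₁ (proj1 z)) (f₂ (proj2 z)), ?_, col, ?_⟩
  · rintro z ⟨x, hx, y, hy, hzx, hzy⟩ z' ⟨x', hx', y', hy', hzx', hzy'⟩
    rw [eq_glue hzx hzy, eq_glue hzx' hzy']
    beta_reduce
    rw [proj1_glue, proj2_glue, proj1_glue, proj2_glue,
      dist_glue, dist_glue, hf₁copy x hx x' hx', hf₂copy y hy y' hy']
  · rintro z ⟨x, hx, y, hy, hzx, hzy⟩
    rw [eq_glue hzx hzy]
    beta_reduce
    rw [proj1_glue, proj2_glue]
    have key : (fun y : Y => χ (glue (f₁ x) y.1)) = fun y : Y => χ (glue (f₁ x₀) y.1) :=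
      e.injective ((hf₁mono x hx).trans (hf₁mono x₀ hx₀).symm)
    have hcf := congrFun key ⟨f₂ y, hf₂Y y hy⟩
    exact hcf.trans (hf₂mono y hy)

/-- The Cartesian product of any two Gallai-Ramsey configurations is Gallai-Ramsey if and only
if every Gallai-Ramsey configuration is Ramsey. (Configurations are finite nonempty point sets
in some Euclidean space.) -/
theorem gallai_ramsey_product_iff_gallai_ramsey_imp_ramsey :
    (∀ (m₁ m₂ : ℕ) (K₁ : Set (EuclideanSpace ℝ (Fin m₁)))
        (K₂ : Set (EuclideanSpace ℝ (Fin m₂))),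
        K₁.Finite → K₁.Nonempty → K₂.Finite → K₂.Nonempty →
        IsGallaiRamseyConfig K₁ → IsGallaiRamseyConfig K₂ →
        IsGallaiRamseyConfig (cartesianProd K₁ K₂)) ↔
    (∀ (m : ℕ) (K : Set (EuclideanSpace ℝ (Fin m))),
        K.Finite → K.Nonempty → IsGallaiRamseyConfig K → IsRamseyConfig K) := by
  constructor
  · -- products of Gallai-Ramsey are Gallai-Ramsey → Gallai-Ramsey implies Ramsey
    intro hprod m K hKf hKn hKg r hr
    have hsGR : IsGallaiRamseyConfig (simplexVertices (r + 1) 1) :=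
      ramsey_imp_gallai (simplex_ramsey r)
    have hsfin : (simplexVertices (r + 1) 1).Finite := Set.finite_range _
    have hsne : (simplexVertices (r + 1) 1).Nonempty :=
      ⟨EuclideanSpace.single (0 : Fin (r + 1)) ((1 : ℝ) / Real.sqrt 2), ⟨0, rfl⟩⟩
    obtain ⟨d, hd⟩ := hprod m (r + 1) K (simplexVertices (r + 1) 1)
      hKf hKn hsfin hsne hKg hsGR r hr
    refine ⟨d, fun χ => ?_⟩
    have hv₀ : (EuclideanSpace.single (0 : Fin (r + 1)) ((1 : ℝ) / Real.sqrt 2))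
        ∈ simplexVertices (r + 1) 1 := ⟨0, rfl⟩
    rcases hd χ with ⟨f, hfcopy, col, hfmono⟩ | ⟨f, hfcopy, hfrain⟩
    · -- a monochromatic copy of the product yields a monochromatic copy of K
      refine ⟨fun x =>
        f (glue x (EuclideanSpace.single (0 : Fin (r + 1)) ((1 : ℝ) / Real.sqrt 2))),
        ?_, col, ?_⟩
      · intro x hx y hy
        rw [hfcopy _ (glue_mem hx hv₀) _ (glue_mem hy hv₀), dist_glue, dist_self]
        rw [show ((0 : ℝ) ^ 2 = 0) by norm_num, add_zero, Real.sqrt_sq dist_nonneg]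
      · intro x hx
        exact hfmono _ (glue_mem hx hv₀)
    · -- a rainbow copy of the product is impossible: it has more than r points
      exfalso
      obtain ⟨x₀, hx₀⟩ := hKn
      have hc0 : ((1 : ℝ) / Real.sqrt 2) ≠ 0 := by positivity
      have hzmem : ∀ i : Fin (r + 1),
          glue x₀ (EuclideanSpace.single i ((1 : ℝ) / Real.sqrt 2))
            ∈ cartesianProd K (simplexVertices (r + 1) 1) :=
        fun i => glue_mem hx₀ ⟨i, rfl⟩
      have hzinj : ∀ i j : Fin (r + 1),
          glue x₀ (EuclideanSpace.single i ((1 : ℝ) / Real.sqrt 2))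
            = glue x₀ (EuclideanSpace.single j ((1 : ℝ) / Real.sqrt 2)) → i = j := by
        intro i j hij
        refine single_inj hc0 (PiLp.ext fun k => ?_)
        have hk : glue x₀ (EuclideanSpace.single i ((1 : ℝ) / Real.sqrt 2)) (Fin.natAdd m k)
            = glue x₀ (EuclideanSpace.single j ((1 : ℝ) / Real.sqrt 2)) (Fin.natAdd m k) := by
          rw [hij]
        rwa [glue_natAdd, glue_natAdd] at hk
      have hinj : Function.Injective fun i : Fin (r + 1) =>
          χ (f (glue x₀ (EuclideanSpace.single i ((1 : ℝ) / Real.sqrt 2)))) := by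
        intro i j hij
        by_contra hne
        exact hfrain _ (hzmem i) _ (hzmem j) (fun he => hne (hzinj i j he)) hij
      have hcard := Fintype.card_le_of_injective _ hinj
      simp only [Fintype.card_fin] at hcard
      omega
  · -- Gallai-Ramsey implies Ramsey → products of Gallai-Ramsey are Gallai-Ramsey
    intro himp m₁ m₂ K₁ K₂ h1f h1n h2f h2n hg1 hg2
    exact ramsey_imp_gallai
      (product_ramsey h2f h1n (himp _ _ h1f h1n hg1) (himp _ _ h2f h2n hg2))
end
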